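/- Let p₁,…,p_d be nonnegative integers with p_d ≥ 2, α = p₁+⋯+p_{d−1}, and k = ⌊(p_d−2)/(α+1)⌋. If h = (a₁,…,a_{d+1}) ∈ Z^{d+1} satisfies w_h(T_{p₁…p_d}) ≤ k+2, then a_d ∈ {−1, 0, 1}. -/

import Mathlib

open scoped BigOperators

/-- Lattice width of a set `P ⊆ ℝ^d` in direction `h`:
`max_{x∈P} ⟨h,x⟩ − min_{x∈P} ⟨h,x⟩`. -/
noncomputable def width {d : ℕ} (P : Set (Fin d → ℝ)) (h : Fin d → ℝ) : ℝ :=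
  sSup ((fun x => ∑ i, h i * x i) '' P) - sInf ((fun x => ∑ i, h i * x i) '' P)

/-- `l₁(P) = max_{x∈P}(x₁+⋯+x_d) − Σᵢ min_{x∈P} xᵢ`. -/
noncomputable def l1 {d : ℕ} (P : Set (Fin d → ℝ)) : ℝ :=
  sSup ((fun x => ∑ i, x i) '' P) - ∑ i, sInf ((fun x => x i) '' P)

/-- `P` is a lattice polytope: the convex hull of a nonempty finite set of integer points. -/
def IsLatticePolytope {d : ℕ} (P : Set (Fin d → ℝ)) : Prop :=
  ∃ V : Finset (Fin d → ℝ), V.Nonempty ∧ (∀ v ∈ V, ∀ i, ∃ m : ℤ, v i = (m : ℝ)) ∧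
    P = convexHull ℝ (V : Set (Fin d → ℝ))

/-- `P` is a polytope: the convex hull of a nonempty finite set of points. -/
def IsPolytope {d : ℕ} (P : Set (Fin d → ℝ)) : Prop :=
  ∃ V : Finset (Fin d → ℝ), V.Nonempty ∧ P = convexHull ℝ (V : Set (Fin d → ℝ))

/-- The `i`-th standard basis vector of `ℝ^d`. -/
def stdVert (d : ℕ) (i : Fin d) : Fin d → ℝ := fun j => if j = i then 1 else 0

/-- The extra vertex `(p₁, …, pₙ, q, 1) ∈ ℝ^{n+2}`. -/
def Tvert (n : ℕ) (p : Fin n → ℤ) (q : ℤ) : Fin (n + 2) → ℝ :=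
  fun j => if h : (j : ℕ) < n then (p ⟨j, h⟩ : ℝ) else if (j : ℕ) = n then (q : ℝ) else 1

/-- The simplex `T_{p₁…p_{n} q} = conv{e₁,…,e_{n+2}, (p₁,…,pₙ,q,1)} ⊆ ℝ^{n+2}`. -/
noncomputable def Tsimp (n : ℕ) (p : Fin n → ℤ) (q : ℤ) : Set (Fin (n + 2) → ℝ) :=
  convexHull ℝ (insert (Tvert n p q) (Set.range (stdVert (n + 2))))

/-- if `w_h(T_{p₁…p_d}) ≤ k+2` for an integer vector `h = (a₁,…,a_{d+1})`,
then `a_d ∈ {−1,0,1}`. (Here `n = d−1`, `q = p_d`, and `a_d` is the coordinate of index `n`.) -/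
theorem coord_small_of_width_le (n : ℕ) (p : Fin n → ℤ) (hp : ∀ i, 0 ≤ p i) (q : ℤ)
    (hq : 2 ≤ q) (α k : ℤ) (hα : α = ∑ i, p i) (hk : k = (q - 2) / (α + 1))
    (a : Fin (n + 2) → ℤ)
    (hw : width (Tsimp n p q) (fun i => (a i : ℝ)) ≤ (k : ℝ) + 2) :
    a ⟨n, by omega⟩ = -1 ∨ a ⟨n, by omega⟩ = 0 ∨ a ⟨n, by omega⟩ = 1 := by
  classical
  set f : (Fin (n + 2) → ℝ) → ℝ := fun x => ∑ i, (a i : ℝ) * x i with hf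
  have hVfin : (insert (Tvert n p q) (Set.range (stdVert (n + 2)))).Finite :=
    (Set.finite_range _).insert _
  have hcomp : IsCompact (Tsimp n p q) := hVfin.isCompact_convexHull ℝ
  have hcont : Continuous f := by
    apply continuous_finset_sum
    intro i _
    exact continuous_const.mul (continuous_apply i)
  have hKcomp : IsCompact (f '' Tsimp n p q) := hcomp.image hcont
  have hwidth : width (Tsimp n p q) (fun i => (a i : ℝ))
      = sSup (f '' Tsimp n p q) - sInf (f '' Tsimp n p q) := rfl
  have key : ∀ u ∈ insert (Tvert n p q) (Set.range (stdVert (n + 2))),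
      ∀ v ∈ insert (Tvert n p q) (Set.range (stdVert (n + 2))),
      f u - f v ≤ (k : ℝ) + 2 := by
    intro u hu v hv
    have hu' : f u ∈ f '' Tsimp n p q :=
      ⟨u, subset_convexHull ℝ _ hu, rfl⟩
    have hv' : f v ∈ f '' Tsimp n p q :=
      ⟨v, subset_convexHull ℝ _ hv, rfl⟩
    have h1 : f u ≤ sSup (f '' Tsimp n p q) := le_csSup hKcomp.bddAbove hu'
    have h2 : sInf (f '' Tsimp n p q) ≤ f v := csInf_le hKcomp.bddBelow hv'
    rw [hwidth] at hw
    linarith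
  have hstd : ∀ i : Fin (n + 2), f (stdVert (n + 2) i) = (a i : ℝ) := by
    intro i
    simp [hf, stdVert, mul_ite, mul_one, mul_zero]
  set c : ℤ := (∑ i : Fin n, a (i.castSucc.castSucc) * p i)
      + a ⟨n, by omega⟩ * q + a ⟨n + 1, by omega⟩ with hc
  have hTv : f (Tvert n p q) = (c : ℝ) := by
    rw [hf]
    show (∑ j : Fin (n + 2), (a j : ℝ) * Tvert n p q j) = _
    rw [Fin.sum_univ_castSucc, Fin.sum_univ_castSucc]
    have e1 : ∀ i : Fin n, Tvert n p q (i.castSucc.castSucc) = (p i : ℝ) := by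
      intro i
      simp [Tvert, i.is_lt]
    have e2 : Tvert n p q ((Fin.last n).castSucc) = (q : ℝ) := by
      simp [Tvert]
    have e3 : Tvert n p q (Fin.last (n + 1)) = 1 := by
      simp [Tvert]
    rw [e2, e3]
    rw [Finset.sum_congr rfl (fun i _ => by rw [e1 i])]
    have hn1 : ((Fin.last n).castSucc : Fin (n + 2)) = ⟨n, by omega⟩ := rfl
    have hn2 : (Fin.last (n + 1) : Fin (n + 2)) = ⟨n + 1, by omega⟩ := rfl
    rw [hn1, hn2, hc]
    push_cast
    ring
  have hmemT : Tvert n p q ∈ insert (Tvert n p q) (Set.range (stdVert (n + 2))) :=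
    Set.mem_insert _ _
  have hmemS : ∀ i : Fin (n + 2),
      stdVert (n + 2) i ∈ insert (Tvert n p q) (Set.range (stdVert (n + 2))) :=
    fun i => Set.mem_insert_of_mem _ ⟨i, rfl⟩
  have h1 : ∀ i j : Fin (n + 2), a i - a j ≤ k + 2 := by
    intro i j
    have := key _ (hmemS i) _ (hmemS j)
    rw [hstd, hstd] at this
    exact_mod_cast this
  have h2 : ∀ i : Fin (n + 2), c - a i ≤ k + 2 := by
    intro i
    have := key _ hmemT _ (hmemS i)
    rw [hTv, hstd] at this
    exact_mod_cast this
  have h3 : ∀ i : Fin (n + 2), a i - c ≤ k + 2 := by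
    intro i
    have := key _ (hmemS i) _ hmemT
    rw [hTv, hstd] at this
    exact_mod_cast this
  -- integer arithmetic
  set T : Finset ℤ := Finset.univ.image a with hT
  have hTne : T.Nonempty := ⟨a ⟨n, by omega⟩, Finset.mem_image_of_mem a (Finset.mem_univ _)⟩
  obtain ⟨j₀, -, hj₀⟩ := Finset.mem_image.mp (T.min'_mem hTne)
  obtain ⟨j₁, -, hj₁⟩ := Finset.mem_image.mp (T.max'_mem hTne)
  set m : ℤ := T.min' hTne with hm
  set M : ℤ := T.max' hTne with hM
  have hmin : ∀ i, m ≤ a i := fun i => T.min'_le _ (Finset.mem_image_of_mem a (Finset.mem_univ i))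
  have hmax : ∀ i, a i ≤ M := fun i => T.le_max' _ (Finset.mem_image_of_mem a (Finset.mem_univ i))
  have hα0 : 0 ≤ α := hα ▸ Finset.sum_nonneg fun i _ => hp i
  have hk0 : 0 ≤ k := hk ▸ Int.ediv_nonneg (by omega) (by omega)
  set r : ℤ := (q - 2) % (α + 1) with hr
  have hr0 : 0 ≤ r := Int.emod_nonneg _ (by omega)
  have hrα : r ≤ α := by
    have := Int.emod_lt_of_pos (q - 2) (show (0:ℤ) < α + 1 by omega)
    omega
  have hdm : (α + 1) * k + r = q - 2 := by
    rw [hk, hr]; exact Int.mul_ediv_add_emod _ _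
  have hsum_lo : m * α ≤ ∑ i : Fin n, a (i.castSucc.castSucc) * p i := by
    calc m * α = ∑ i : Fin n, m * p i := by rw [hα, Finset.mul_sum]
      _ ≤ _ := Finset.sum_le_sum fun i _ => mul_le_mul_of_nonneg_right (hmin _) (hp i)
  have hsum_hi : (∑ i : Fin n, a (i.castSucc.castSucc) * p i) ≤ M * α := by
    calc (∑ i : Fin n, a (i.castSucc.castSucc) * p i) ≤ ∑ i : Fin n, M * p i :=
          Finset.sum_le_sum fun i _ => mul_le_mul_of_nonneg_right (hmax _) (hp i)
      _ = M * α := by rw [hα, Finset.mul_sum]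
  by_contra hcon
  push_neg at hcon
  obtain ⟨hne1, hne0, hne1'⟩ := hcon
  have hB1 : m ≤ a ⟨n + 1, by omega⟩ := hmin _
  have hB2 : a ⟨n + 1, by omega⟩ ≤ M := hmax _
  have hA2 : 2 ≤ a ⟨n, by omega⟩ ∨ a ⟨n, by omega⟩ ≤ -2 := by omega
  rcases hA2 with h | h
  · have e1 := h2 j₀
    rw [hj₀] at e1
    have e2 := h1 ⟨n, by omega⟩ j₀
    rw [hj₀] at e2
    nlinarith [mul_nonneg hα0 (show (0:ℤ) ≤ m - a ⟨n, by omega⟩ + k + 2 by linarith),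
      mul_nonneg (show (0:ℤ) ≤ a ⟨n, by omega⟩ - 2 by linarith) (show (0:ℤ) ≤ α + q by omega),
      mul_nonneg hk0 hα0]
  · have e1 := h3 j₁
    rw [hj₁] at e1
    have e2 := h1 j₁ ⟨n, by omega⟩
    rw [hj₁] at e2
    nlinarith [mul_nonneg hα0 (show (0:ℤ) ≤ a ⟨n, by omega⟩ + k + 2 - M by linarith),
      mul_nonneg (show (0:ℤ) ≤ -a ⟨n, by omega⟩ - 2 by linarith) (show (0:ℤ) ≤ α + q by omega),
      mul_nonneg hk0 hα0]
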